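/- Let k be an algebraically closed field of characteristic ≠ 2, V a k-vector space of dimension n, and let q, φ be symmetric bilinear forms on V with q nondegenerate. Suppose the polynomial λ ↦ det(φ − λ q) (computed via Gram matrices in any basis) has n distinct roots λ_1, …, λ_n in k. Then V decomposes as a direct sum of n lines L_1 ⊕ ⋯ ⊕ L_n that are pairwise orthogonal for both q and φ, and φ restricted to L_i equals λ_i times q restricted to L_i. -/

import Mathlib

/-- Simultaneous diagonalization of a pencil of quadrics in general position: if `q` is
nondegenerate and `det(φ - λq)` has `n` distinct roots `λ_1, …, λ_n`, then there is a
basis whose lines are pairwise orthogonal for both forms, with `φ = λ_i · q` on the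
`i`-th line. -/
theorem pencil_general_position_diagonalization
    {k V : Type*} [Field k] [IsAlgClosed k] [AddCommGroup V] [Module k V]
    (hchar : ringChar k ≠ 2) (n : ℕ) (bV : Module.Basis (Fin n) k V)
    (q φ : V →ₗ[k] V →ₗ[k] k)
    (hqsymm : ∀ x y, q x y = q y x) (hφsymm : ∀ x y, φ x y = φ y x)
    (hqnd : ∀ x, (∀ y, q x y = 0) → x = 0)
    (lam : Fin n → k) (hinj : Function.Injective lam)
    (hroot : ∀ i, Matrix.det
        ((Matrix.of fun r s => φ (bV r) (bV s)) - lam i • Matrix.of fun r s => q (bV r) (bV s))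
      = 0) :
    ∃ c : Module.Basis (Fin n) k V,
      (∀ i j, i ≠ j → q (c i) (c j) = 0 ∧ φ (c i) (c j) = 0) ∧
        ∀ i, φ (c i) (c i) = lam i * q (c i) (c i) := by
  rcases Nat.eq_zero_or_pos n with rfl | hn
  · exact ⟨bV, fun i => i.elim0, fun i => i.elim0⟩
  haveI : Nonempty (Fin n) := ⟨⟨0, hn⟩⟩
  haveI : FiniteDimensional k V := Module.Finite.of_basis bV
  have hfr : Module.finrank k V = n := by
    simpa using Module.finrank_eq_card_basis bV
  -- extract eigenvectors
  have key : ∀ i, ∃ v : V, v ≠ 0 ∧ ∀ y, φ v y = lam i * q v y := by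
    intro i
    obtain ⟨x, hx, hMx⟩ := (Matrix.exists_mulVec_eq_zero_iff).2 (hroot i)
    set v : V := bV.equivFun.symm x with hv
    have hvne : v ≠ 0 := by
      simpa [hv] using (map_ne_zero_iff _ bV.equivFun.symm.injective).2 hx
    refine ⟨v, hvne, ?_⟩
    have hbr : ∀ r, φ v (bV r) = lam i * q v (bV r) := by
      intro r
      have h0 := congrFun hMx r
      have hveq : v = ∑ s, x s • bV s := by
        rw [hv, Module.Basis.equivFun_symm_apply]
      have h0' : ∑ s, x s * (φ (bV r) (bV s) - lam i * q (bV r) (bV s)) = 0 := by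
        simpa [Matrix.mulVec, dotProduct, mul_comm, mul_left_comm] using h0
      have h1 : φ (bV r) v - lam i * q (bV r) v = 0 := by
        rw [hveq]
        simp only [map_sum, map_smul, smul_eq_mul]
        rw [Finset.mul_sum, ← Finset.sum_sub_distrib, ← h0']
        exact Finset.sum_congr rfl fun s _ => by ring
      rw [hφsymm v (bV r), hqsymm v (bV r)]
      linear_combination h1
    have : (φ v : V →ₗ[k] k) = lam i • (q v) := by
      apply bV.ext
      intro r
      simpa using hbr r
    intro y
    have := congrArg (fun f : V →ₗ[k] k => f y) this
    simpa using this
  choose v hvne hveq using key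
  -- the operator T with q (T x) = φ x
  have hqinj : Function.Injective q := by
    rw [injective_iff_map_eq_zero]
    intro x hx
    exact hqnd x (fun y => by rw [hx]; rfl)
  have hdim : Module.finrank k V = Module.finrank k (Module.Dual k V) :=
    (Subspace.dual_finrank_eq).symm
  let e : V ≃ₗ[k] Module.Dual k V := q.linearEquivOfInjective hqinj hdim
  let T : Module.End k V := (e.symm : Module.Dual k V →ₗ[k] V) ∘ₗ φ
  have hT : ∀ i, T (v i) = lam i • v i := by
    intro i
    have h1 : φ (v i) = q (lam i • v i) := by
      ext y
      simp [hveq i y, mul_comm]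
    have h2 : e (lam i • v i) = φ (v i) := by
      rw [h1]
      exact q.linearEquivOfInjective_apply hqinj hdim _
    show e.symm (φ (v i)) = lam i • v i
    rw [← h2, e.symm_apply_apply]
  have hli : LinearIndependent k v := by
    apply T.eigenvectors_linearIndependent' lam hinj
    intro i
    exact ⟨Module.End.mem_eigenspace_iff.2 (hT i), hvne i⟩
  have hspan : Submodule.span k (Set.range v) = ⊤ :=
    hli.span_eq_top_of_card_eq_finrank (by simp [hfr])
  let c : Module.Basis (Fin n) k V := Module.Basis.mk hli hspan.ge
  have hc : ∀ i, c i = v i := fun i => Module.Basis.mk_apply _ _ i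
  refine ⟨c, ?_, ?_⟩
  · intro i j hij
    have h1 : φ (v i) (v j) = lam i * q (v i) (v j) := hveq i (v j)
    have h2 : φ (v i) (v j) = lam j * q (v i) (v j) := by
      rw [hφsymm, hveq j (v i), hqsymm]
    have hq0 : q (v i) (v j) = 0 := by
      have hl : lam i ≠ lam j := fun h => hij (hinj h)
      have : (lam i - lam j) * q (v i) (v j) = 0 := by linear_combination h2 - h1
      rcases mul_eq_zero.1 this with h | h
      · exact absurd (sub_eq_zero.1 h) hl
      · exact h
    rw [hc, hc]
    exact ⟨hq0, by rw [h1, hq0, mul_zero]⟩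
  · intro i
    rw [hc]
    exact hveq i (v i)
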